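/- The set of Urysohn matrices exactly reproducing a given input-output behaviour is an affine subspace of dimension m − 1: if U and U' are two m × n matrices producing the same output Σ_j U[j, k_{m−j+1}] = Σ_j U'[j, k_{m−j+1}] for every input sequence k ∈ (Fin n)^m, then there exist constants c_1,…,c_m ∈ ℝ with c_1 + ⋯ + c_m = 0 such that U'[j,c] = U[j,c] + c_j for all j, c. Conversely, adding any such constants row-wise preserves all outputs. -/
import Mathlib


/-- The output of the discrete Urysohn operator with matrix `U` on the input window
`k = (k_1, …, k_m)` (with `k_m` the most recent input): `y(k) = Σ_{j=1}^m U[j, k_{m-j+1}]`. -/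
def uryOut {m n : ℕ} (U : Matrix (Fin m) (Fin n) ℝ) (k : Fin m → Fin n) : ℝ :=
  ∑ j : Fin m, U j (k j.rev)

/-- the set of Urysohn matrices reproducing a given input-output behaviour
is an affine subspace of dimension `m − 1`: two matrices produce the same output on every
input sequence if and only if they differ by row-wise constants `c_1, …, c_m` summing to
zero. -/
theorem urysohn_equivalence_class (m n : ℕ) (hn : 0 < n)
    (U U' : Matrix (Fin m) (Fin n) ℝ) :
    ((∀ k : Fin m → Fin n, uryOut U k = uryOut U' k) →
      ∃ c : Fin m → ℝ, (∑ j : Fin m, c j = 0) ∧ ∀ j cc, U' j cc = U j cc + c j) ∧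
    (∀ c : Fin m → ℝ, (∑ j : Fin m, c j = 0) →
      (∀ j cc, U' j cc = U j cc + c j) →
      ∀ k : Fin m → Fin n, uryOut U k = uryOut U' k) := by
  haveI : NeZero n := ⟨hn.ne'⟩
  constructor
  · intro h
    refine ⟨fun j => U' j 0 - U j 0, ?_, ?_⟩
    · have := h (fun _ => 0)
      simp only [uryOut] at this
      simp [Finset.sum_sub_distrib, this]
    · intro j cc
      have h1 := h (fun i => if i = j.rev then cc else 0)
      have h0 := h (fun _ => 0)
      simp only [uryOut] at h1 h0
      have key : ∀ (V : Matrix (Fin m) (Fin n) ℝ),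
          (∑ j' : Fin m, V j' (if j'.rev = j.rev then cc else 0))
            = V j cc - V j 0 + ∑ j' : Fin m, V j' 0 := by
        intro V
        have : ∀ j' : Fin m, V j' (if j'.rev = j.rev then cc else 0)
            = (if j' = j then V j cc - V j 0 else 0) + V j' 0 := by
          intro j'
          by_cases hj : j' = j
          · subst hj; simp
          · rw [if_neg (by simpa [Fin.rev_inj] using hj), if_neg hj]; ring
        rw [Finset.sum_congr rfl fun j' _ => this j', Finset.sum_add_distrib,
          Finset.sum_ite_eq' Finset.univ j]
        simp
      rw [key U, key U', h0] at h1
      show U' j cc = U j cc + (U' j 0 - U j 0)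
      linarith
  · intro c hc hU k
    simp only [uryOut]
    rw [Finset.sum_congr rfl fun j _ => hU j (k j.rev), Finset.sum_add_distrib, hc, add_zero]
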